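/- Let g ∈ ℕ and let ξ₋₁, ξ₀, …, ξ_g be trace-free 2×2 complex matrices with ξ₋₁ a complex multiple of E₁₂ = [[0,1],[0,0]], satisfying the reality condition ξ_d = −(conj ξ_{g−1−d})ᵀ for all d ∈ {−1, 0, …, g}; write ξ(λ) = Σ_{d=−1}^{g} ξ_d·λ^d. Then for every λ with |λ| = 1 the number λ^{1−g}·det ξ(λ) is a nonnegative real number, and for every d ∈ {−1, …, g} the operator norm of the coefficient satisfies ‖ξ_d‖ ≤ sup_{|λ|=1} √(λ^{1−g}·det ξ(λ)). -/

import Mathlib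

open Complex Matrix
open scoped Matrix.Norms.L2Operator

/-- The Laurent polynomial `ξ(λ) = Σ_{d=-1}^{g} ξ_d λ^d` with matrix coefficients. -/
noncomputable def xiFun (g : ℕ) (ξ : ℤ → Matrix (Fin 2) (Fin 2) ℂ) (l : ℂ) :
    Matrix (Fin 2) (Fin 2) ℂ :=
  ∑ d ∈ Finset.Icc (-1 : ℤ) (g : ℤ), l ^ d • ξ d


lemma xi_conjT (g : ℕ) (ξ : ℤ → Matrix (Fin 2) (Fin 2) ℂ)
    (hreal : ∀ d : ℤ, -1 ≤ d → d ≤ (g : ℤ) →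
      ξ d = -((ξ ((g : ℤ) - 1 - d)).conjTranspose)) (l : ℂ) (hl : ‖l‖ = 1) :
    (xiFun g ξ l)ᴴ = -(l ^ ((1 : ℤ) - (g : ℤ)) • xiFun g ξ l) := by
  have hl0 : l ≠ 0 := by intro h; rw [h] at hl; simp at hl
  have hconj : (starRingEnd ℂ) l = l⁻¹ := by
    rw [Complex.inv_def]
    have : Complex.normSq l = 1 := by
      have := Complex.sq_norm l
      rw [hl] at this; simpa using this.symm
    simp [this]
  unfold xiFun
  rw [conjTranspose_sum, Finset.smul_sum, ← Finset.sum_neg_distrib]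
  refine Finset.sum_nbij' (fun d => (g : ℤ) - 1 - d) (fun d => (g : ℤ) - 1 - d) ?_ ?_ ?_ ?_ ?_
  · intro d hd; simp only [Finset.mem_Icc] at hd ⊢; omega
  · intro d hd; simp only [Finset.mem_Icc] at hd ⊢; omega
  · intro d _; ring
  · intro d _; ring
  · intro d hd
    simp only [Finset.mem_Icc] at hd
    have h1 : (ξ d)ᴴ = -ξ ((g : ℤ) - 1 - d) := by
      rw [hreal d hd.1 hd.2]; simp
    rw [conjTranspose_smul, h1]
    simp only [star_zpow₀, RCLike.star_def, hconj]
    rw [smul_smul, smul_neg, ← neg_smul, _root_.inv_zpow, ← _root_.zpow_neg, ← zpow_add₀ hl0]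
    rw [show (1 - (g:ℤ)) + ((g:ℤ) - 1 - d) = -d by ring, neg_smul]

lemma xi_trace (g : ℕ) (ξ : ℤ → Matrix (Fin 2) (Fin 2) ℂ)
    (htr : ∀ d : ℤ, -1 ≤ d → d ≤ (g : ℤ) → (ξ d).trace = 0) (l : ℂ) :
    (xiFun g ξ l).trace = 0 := by
  unfold xiFun
  rw [trace_sum]
  refine Finset.sum_eq_zero fun d hd => ?_
  simp only [Finset.mem_Icc] at hd
  rw [trace_smul, htr d hd.1 hd.2, smul_zero]

lemma key (g : ℕ) (ξ : ℤ → Matrix (Fin 2) (Fin 2) ℂ)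
    (htr : ∀ d : ℤ, -1 ≤ d → d ≤ (g : ℤ) → (ξ d).trace = 0)
    (hreal : ∀ d : ℤ, -1 ≤ d → d ≤ (g : ℤ) →
      ξ d = -((ξ ((g : ℤ) - 1 - d)).conjTranspose)) (l : ℂ) (hl : ‖l‖ = 1) :
    ∃ r : ℝ, 0 ≤ r ∧ l ^ ((1 : ℤ) - (g : ℤ)) * (xiFun g ξ l).det = (r : ℂ) ∧
      ‖xiFun g ξ l‖ = Real.sqrt r := by
  have hl0 : l ≠ 0 := by intro h; rw [h] at hl; simp at hl
  obtain ⟨μ, hμ⟩ := IsAlgClosed.exists_pow_nat_eq (l ^ ((1 : ℤ) - (g : ℤ))) two_pos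
  have hμn : ‖μ‖ = 1 := by
    have h2 : ‖μ‖ ^ 2 = 1 := by
      rw [← norm_pow, hμ, norm_zpow, hl, _root_.one_zpow]
    nlinarith [norm_nonneg μ]
  have hμ0 : μ ≠ 0 := by intro h; rw [h] at hμn; simp at hμn
  set X := xiFun g ξ l with hX
  set A := μ • X with hA
  have hAH : Aᴴ = -A := by
    rw [hA, conjTranspose_smul, xi_conjT g ξ hreal l hl, ← hμ]
    simp only [RCLike.star_def, smul_neg, smul_smul, ← hX]
    have : (starRingEnd ℂ) μ * μ ^ 2 = μ := by
      have hms : (starRingEnd ℂ) μ * μ = 1 := by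
        rw [mul_comm, Complex.mul_conj]
        norm_cast
        rw [Complex.normSq_eq_norm_sq, hμn]; norm_num
      calc (starRingEnd ℂ) μ * μ ^ 2 = ((starRingEnd ℂ) μ * μ) * μ := by ring
        _ = μ := by rw [hms, one_mul]
    rw [this]
  have htrA : A.trace = 0 := by
    rw [hA, trace_smul, xi_trace g ξ htr l, smul_zero]
  set z := A 0 0 with hz
  set w := A 0 1 with hw
  have hzre : z.re = 0 := by
    have h00 : (starRingEnd ℂ) z = -z := by
      have := congrFun (congrFun hAH 0) 0
      simpa [Matrix.conjTranspose_apply] using this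
    have := congrArg Complex.re h00
    simp at this; linarith
  have h10 : A 1 0 = -((starRingEnd ℂ) w) := by
    have h := congrFun (congrFun hAH 0) 1
    simp only [Matrix.conjTranspose_apply, Matrix.neg_apply] at h
    have h2 := congrArg star h
    simpa using h2
  have h11 : A 1 1 = -z := by
    rw [Matrix.trace_fin_two] at htrA
    linear_combination htrA
  have hr0 : (0:ℝ) ≤ z.im ^ 2 + Complex.normSq w :=
    add_nonneg (sq_nonneg _) (Complex.normSq_nonneg _)
  refine ⟨z.im ^ 2 + Complex.normSq w, hr0, ?_, ?_⟩
  · have hdetA : A.det = ((z.im ^ 2 + Complex.normSq w : ℝ) : ℂ) := by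
      rw [Matrix.det_fin_two, h11, h10, ← hz, ← hw]
      apply Complex.ext <;>
        simp [Complex.normSq_apply, ← Complex.ofReal_pow, hzre] <;> ring
    have : A.det = μ ^ 2 * X.det := by
      rw [hA, Matrix.det_smul]
      norm_num
    rw [← hμ, ← this, hdetA]
  · have hAXnorm : ‖A‖ = ‖X‖ := by rw [hA, norm_smul, hμn, one_mul]
    have hAHA : Aᴴ * A = ((z.im ^ 2 + Complex.normSq w : ℝ) : ℂ) • (1 : Matrix (Fin 2) (Fin 2) ℂ) := by
      rw [hAH]
      ext i j
      fin_cases i <;> fin_cases j <;>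
        · apply Complex.ext <;>
            simp [Matrix.mul_apply, Fin.sum_univ_two, h10, h11, ← hz, ← hw,
              Matrix.one_apply, Complex.normSq_apply, ← Complex.ofReal_pow, hzre] <;> ring
    haveI : Nontrivial (Matrix (Fin 2) (Fin 2) ℂ) :=
      ⟨0, 1, fun h => by simpa using congrFun (congrFun h 0) 0⟩
    have hnorm1 : ‖(1 : Matrix (Fin 2) (Fin 2) ℂ)‖ = 1 := CStarRing.norm_one
    have h2 : ‖A‖ * ‖A‖ = z.im ^ 2 + Complex.normSq w := by
      rw [← Matrix.l2_opNorm_conjTranspose_mul_self, hAHA, norm_smul, hnorm1, mul_one,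
        Complex.norm_real, Real.norm_eq_abs, _root_.abs_of_nonneg hr0]
    rw [← hAXnorm]
    rw [← h2, Real.sqrt_mul_self (norm_nonneg A)]

lemma xi_cont : ∀ (g : ℕ) (ξ : ℤ → Matrix (Fin 2) (Fin 2) ℂ),
    ContinuousOn (fun l => ‖xiFun g ξ l‖) (Metric.sphere (0:ℂ) 1) := by
  intro g ξ
  refine ContinuousOn.norm ?_
  unfold xiFun
  refine continuousOn_finset_sum _ fun d _ => ContinuousOn.fun_smul ?_ continuousOn_const
  refine (continuousOn_zpow₀ d).mono ?_
  intro x hx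
  simp only [Metric.mem_sphere, dist_zero_right] at hx
  simp only [Set.mem_compl_iff, Set.mem_singleton_iff]
  intro h; rw [h] at hx; simp at hx

lemma xi_bdd (g : ℕ) (ξ : ℤ → Matrix (Fin 2) (Fin 2) ℂ)
    (htr : ∀ d : ℤ, -1 ≤ d → d ≤ (g : ℤ) → (ξ d).trace = 0)
    (hreal : ∀ d : ℤ, -1 ≤ d → d ≤ (g : ℤ) →
      ξ d = -((ξ ((g : ℤ) - 1 - d)).conjTranspose)) :
    BddAbove (Set.range fun l : Metric.sphere (0 : ℂ) 1 =>
      Real.sqrt (((l : ℂ) ^ ((1 : ℤ) - (g : ℤ)) * (xiFun g ξ (l : ℂ)).det).re)) := by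
  have heq : ∀ l : Metric.sphere (0 : ℂ) 1,
      Real.sqrt (((l : ℂ) ^ ((1 : ℤ) - (g : ℤ)) * (xiFun g ξ (l : ℂ)).det).re)
        = ‖xiFun g ξ (l : ℂ)‖ := by
    intro l
    have hl : ‖(l : ℂ)‖ = 1 := by
      have := l.2; simpa [Metric.mem_sphere, dist_zero_right] using this
    obtain ⟨r, _, he, hn⟩ := key g ξ htr hreal l hl
    rw [he, Complex.ofReal_re, hn]
  have : (Set.range fun l : Metric.sphere (0 : ℂ) 1 =>
      Real.sqrt (((l : ℂ) ^ ((1 : ℤ) - (g : ℤ)) * (xiFun g ξ (l : ℂ)).det).re))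
      = (fun l => ‖xiFun g ξ l‖) '' (Metric.sphere (0:ℂ) 1) := by
    rw [Set.image_eq_range]
    exact Set.ext fun y => by
      constructor <;> rintro ⟨l, rfl⟩ <;>exact ⟨l, by simp only []; rw [heq l]⟩
  rw [this]
  exact ((isCompact_sphere (0:ℂ) 1).image_of_continuousOn (xi_cont g ξ)).bddAbove

lemma xi_coeff (g : ℕ) (ξ : ℤ → Matrix (Fin 2) (Fin 2) ℂ) (d : ℤ)
    (hd : d ∈ Finset.Icc (-1 : ℤ) (g : ℤ)) :
    ((2 * Real.pi : ℝ) : ℂ) • ξ d =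
      ∫ t in (0:ℝ)..(2 * Real.pi),
        Complex.exp (-(d:ℂ) * ((t:ℂ) * Complex.I)) • xiFun g ξ (Complex.exp ((t:ℂ) * Complex.I)) := by
  have hint : ∀ t : ℝ, Complex.exp (-(d:ℂ) * ((t:ℂ) * Complex.I)) •
      xiFun g ξ (Complex.exp ((t:ℂ) * Complex.I)) =
      ∑ e ∈ Finset.Icc (-1 : ℤ) (g : ℤ),
        Complex.exp ((((e:ℂ) - d) * Complex.I) * (t:ℂ)) • ξ e := by
    intro t
    unfold xiFun
    rw [Finset.smul_sum]
    refine Finset.sum_congr rfl fun e _ => ?_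
    rw [← Complex.exp_int_mul ((t:ℂ) * Complex.I) e, smul_smul, ← Complex.exp_add]
    congr 1
    push_cast
    ring
  simp only [hint]
  rw [intervalIntegral.integral_finset_sum]
  swap
  · intro e _
    exact (((Complex.continuous_exp.comp ((continuous_const.mul
      Complex.continuous_ofReal)))).smul continuous_const).intervalIntegrable _ _
  rw [Finset.sum_eq_single_of_mem d hd]
  · rw [intervalIntegral.integral_smul_const]
    congr 1
    simp only [sub_self, zero_mul]
    rw [intervalIntegral.integral_congr (g := fun _ => (1:ℂ))
      (fun t _ => by simp)]
    simp [sub_zero]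
  · intro e he hne
    rw [intervalIntegral.integral_smul_const,
      integral_exp_mul_complex (by
        simp only [Ne, mul_eq_zero, Complex.I_ne_zero, or_false, sub_eq_zero]
        exact_mod_cast fun h => hne (by exact_mod_cast h))]
    have : Complex.exp (((e:ℂ) - d) * Complex.I * (2 * Real.pi)) = 1 := by
      have := Complex.exp_int_mul_two_pi_mul_I (e - d)
      rw [← this]
      congr 1
      push_cast
      ring
    simp [this]

/-- For a potential `ξ` of genus `g`, the number `λ^{1-g} det ξ(λ)` is a nonnegative real for
every unimodular `λ`, and the operator norm of every coefficient `ξ_d` is bounded by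
`sup_{|λ|=1} √(λ^{1-g} det ξ(λ))`. -/
theorem potential_coefficient_bound (g : ℕ) (ξ : ℤ → Matrix (Fin 2) (Fin 2) ℂ)
    (htr : ∀ d : ℤ, -1 ≤ d → d ≤ (g : ℤ) → (ξ d).trace = 0)
    (hE : ∃ c : ℂ, ξ (-1) = c • (!![0, 1; 0, 0] : Matrix (Fin 2) (Fin 2) ℂ))
    (hreal : ∀ d : ℤ, -1 ≤ d → d ≤ (g : ℤ) →
      ξ d = -((ξ ((g : ℤ) - 1 - d)).conjTranspose)) :
    (∀ l : ℂ, ‖l‖ = 1 →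
        ∃ r : ℝ, 0 ≤ r ∧ l ^ ((1 : ℤ) - (g : ℤ)) * (xiFun g ξ l).det = (r : ℂ)) ∧
    (∀ d : ℤ, -1 ≤ d → d ≤ (g : ℤ) →
        ‖ξ d‖ ≤ ⨆ l : Metric.sphere (0 : ℂ) 1,
          Real.sqrt (((l : ℂ) ^ ((1 : ℤ) - (g : ℤ)) * (xiFun g ξ (l : ℂ)).det).re)) := by
  constructor
  · intro l hl
    obtain ⟨r, hr0, he, _⟩ := key g ξ htr hreal l hl
    exact ⟨r, hr0, he⟩
  · intro d hd1 hd2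
    have hdmem : d ∈ Finset.Icc (-1 : ℤ) (g : ℤ) := Finset.mem_Icc.mpr ⟨hd1, hd2⟩
    set S := ⨆ l : Metric.sphere (0 : ℂ) 1,
      Real.sqrt (((l : ℂ) ^ ((1 : ℤ) - (g : ℤ)) * (xiFun g ξ (l : ℂ)).det).re) with hS
    have hbdd := xi_bdd g ξ htr hreal
    have hpt : ∀ t : ℝ, ‖Complex.exp (-(d:ℂ) * ((t:ℂ) * Complex.I)) •
        xiFun g ξ (Complex.exp ((t:ℂ) * Complex.I))‖ ≤ S := by
      intro t
      have h1 : ‖Complex.exp (-(d:ℂ) * ((t:ℂ) * Complex.I))‖ = 1 := by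
        rw [Complex.norm_exp]
        simp
      have hl : ‖Complex.exp ((t:ℂ) * Complex.I)‖ = 1 := by
        rw [Complex.norm_exp]
        simp
      rw [norm_smul, h1, one_mul]
      obtain ⟨r, hr0, he, hn⟩ := key g ξ htr hreal _ hl
      rw [hn]
      have hmem : Complex.exp ((t:ℂ) * Complex.I) ∈ Metric.sphere (0:ℂ) 1 := by
        simp only [Metric.mem_sphere, dist_zero_right]
        exact hl
      have hle := le_ciSup hbdd (⟨_, hmem⟩ : Metric.sphere (0:ℂ) 1)
      refine le_trans (le_of_eq ?_) hle
      simp only [he, Complex.ofReal_re]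
    have hI := xi_coeff g ξ d hdmem
    have hnormle : ‖((2 * Real.pi : ℝ) : ℂ) • ξ d‖ ≤ S * |2 * Real.pi - 0| := by
      rw [hI]
      exact intervalIntegral.norm_integral_le_of_norm_le_const fun t _ => hpt t
    have hpi : (0:ℝ) < 2 * Real.pi := by positivity
    rw [norm_smul] at hnormle
    have h2 : ‖((2 * Real.pi : ℝ) : ℂ)‖ = 2 * Real.pi := by
      rw [Complex.norm_real, Real.norm_eq_abs, _root_.abs_of_pos hpi]
    rw [h2, sub_zero, _root_.abs_of_pos hpi] at hnormle
    calc ‖ξ d‖ = (2 * Real.pi)⁻¹ * (2 * Real.pi * ‖ξ d‖) := by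
          field_simp
      _ ≤ (2 * Real.pi)⁻¹ * (S * (2 * Real.pi)) := by
          apply mul_le_mul_of_nonneg_left hnormle (by positivity)
      _ = S := by field_simp
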